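/- Let K be ℝ or ℂ and let M be a finitely generated, integral, separated commutative binoid. Let X = MonoidWithZeroHom M K with the topology of pointwise convergence, and let A ⊆ X be the subspace of homomorphisms p such that p(m) = 0 for every non-unit m ∈ M. Then A is a deformation retract of X: there exists a continuous map F : X × [0,1] → X with F(p,1) = p for all p ∈ X, F(p,0) ∈ A for all p ∈ X, and F(p,0) = p for all p ∈ A. In particular, the inclusion A ↪ X is a homotopy equivalence. -/

import Mathlib

open Matrix

namespace KSpecAux



variable {ι : Type*} [Fintype ι]

/-- membership in the cone generated by a list of vectors -/
def InCone : List (ι → ℚ) → (ι → ℚ) → Prop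
  | [], x => x = 0
  | w :: l, x => ∃ t : ℚ, 0 ≤ t ∧ InCone l (x - t • w)

lemma inCone_nonneg_dot (d : ι → ℚ) :
    ∀ (l : List (ι → ℚ)) (x : ι → ℚ), InCone l x → (∀ w ∈ l, 0 ≤ d ⬝ᵥ w) → 0 ≤ d ⬝ᵥ x := by
  intro l
  induction l with
  | nil => intro x hx _; rw [hx]; simp
  | cons w l ih =>
    rintro x ⟨t, ht, hx⟩ hw
    have h1 := ih _ hx (fun u hu => hw u (List.mem_cons_of_mem _ hu))
    have h2 : d ⬝ᵥ (x - t • w) = d ⬝ᵥ x - t * (d ⬝ᵥ w) := by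
      rw [dotProduct_sub, dotProduct_smul, smul_eq_mul]
    nlinarith [hw w (List.mem_cons_self)]

lemma inCone_map (f : (ι → ℚ) →ₗ[ℚ] (ι → ℚ)) :
    ∀ (l : List (ι → ℚ)) (y : ι → ℚ), InCone (l.map f) y → ∃ z, InCone l z ∧ y = f z := by
  intro l
  induction l with
  | nil => intro y hy; exact ⟨0, rfl, by simpa [InCone] using hy⟩
  | cons w l ih =>
    rintro y ⟨t, ht, hy⟩
    obtain ⟨z, hz, hyz⟩ := ih _ hy
    refine ⟨z + t • w, ⟨t, ht, by simpa using hz⟩, ?_⟩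
    rw [map_add, LinearMap.map_smul, ← hyz]
    abel

theorem farkas (l : List (ι → ℚ)) (b : ι → ℚ) (hb : ¬ InCone l b) :
    ∃ d : ι → ℚ, (∀ w ∈ l, 0 ≤ d ⬝ᵥ w) ∧ d ⬝ᵥ b < 0 := by
  obtain ⟨n, hn⟩ : ∃ n, l.length ≤ n := ⟨l.length, le_rfl⟩
  induction n generalizing l b with
  | zero =>
    rw [Nat.le_zero, List.length_eq_zero_iff] at hn
    subst hn
    refine ⟨-b, by simp, ?_⟩
    have h0 : b ⬝ᵥ b ≠ 0 := fun h => hb (dotProduct_self_eq_zero.mp h)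
    have h2 : 0 ≤ b ⬝ᵥ b := Finset.sum_nonneg fun i _ => mul_self_nonneg _
    have h3 : 0 < b ⬝ᵥ b := lt_of_le_of_ne h2 (Ne.symm h0)
    simpa [neg_dotProduct] using h3
  | succ n ihn =>
    match l, hn with
    | [], _ =>
      refine ⟨-b, by simp, ?_⟩
      have h0 : b ⬝ᵥ b ≠ 0 := fun h => hb (dotProduct_self_eq_zero.mp h)
      have h2 : 0 ≤ b ⬝ᵥ b := Finset.sum_nonneg fun i _ => mul_self_nonneg _
      have h3 : 0 < b ⬝ᵥ b := lt_of_le_of_ne h2 (Ne.symm h0)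
      simpa [neg_dotProduct] using h3
    | w :: l, hn =>
    have hln : l.length ≤ n := Nat.le_of_succ_le_succ hn
    have hbl : ¬ InCone l b := by
      intro h; exact hb ⟨0, le_refl _, by simpa using h⟩
    obtain ⟨d, hd, hdb⟩ := ihn l b hbl hln
    by_cases hdw : 0 ≤ d ⬝ᵥ w
    · refine ⟨d, ?_, hdb⟩
      intro u hu
      rcases List.mem_cons.mp hu with h | h
      · rwa [h]
      · exact hd u h
    · push_neg at hdw
      -- projection along w with respect to d
      set c : ℚ := d ⬝ᵥ w with hc
      have hcne : c ≠ 0 := ne_of_lt hdw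
      let f : (ι → ℚ) →ₗ[ℚ] (ι → ℚ) :=
        { toFun := fun x => x - ((d ⬝ᵥ x) / c) • w
          map_add' := by
            intro x y
            show (x + y) - (d ⬝ᵥ (x + y) / c) • w
                = (x - (d ⬝ᵥ x / c) • w) + (y - (d ⬝ᵥ y / c) • w)
            rw [dotProduct_add]
            ext i
            simp only [Pi.add_apply, Pi.sub_apply, Pi.smul_apply, smul_eq_mul, add_div]
            ring
          map_smul' := by
            intro a x
            show (a • x) - (d ⬝ᵥ (a • x) / c) • w = a • (x - (d ⬝ᵥ x / c) • w)
            rw [dotProduct_smul]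
            ext i
            simp only [Pi.sub_apply, Pi.smul_apply, smul_eq_mul, mul_div_assoc]
            ring }
      have hfw : f w = 0 := by
        ext i
        simp only [f, LinearMap.coe_mk, AddHom.coe_mk, ← hc, Pi.sub_apply, Pi.smul_apply,
          smul_eq_mul, Pi.zero_apply, div_self hcne, one_mul, sub_self]
      have hproj : ∀ x, x = f x + ((d ⬝ᵥ x) / c) • w := by
        intro x
        ext i
        simp [f]
      have hnb : ¬ InCone (l.map f) (f b) := by
        intro h
        obtain ⟨z, hz, hfz⟩ := inCone_map f l (f b) h
        have hdz : 0 ≤ d ⬝ᵥ z := inCone_nonneg_dot d l z hz hd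
        have h1 : b - (d ⬝ᵥ b / c) • w = z - (d ⬝ᵥ z / c) • w := hfz
        have hγ : 0 ≤ ((d ⬝ᵥ b) - (d ⬝ᵥ z)) / c :=
          div_nonneg_iff.mpr (Or.inr ⟨by linarith, le_of_lt hdw⟩)
        have hbz2 : b - (((d ⬝ᵥ b) - (d ⬝ᵥ z)) / c) • w = z := by
          rw [sub_div, sub_smul]
          calc b - ((d ⬝ᵥ b / c) • w - (d ⬝ᵥ z / c) • w)
              = (b - (d ⬝ᵥ b / c) • w) + (d ⬝ᵥ z / c) • w := by abel
            _ = (z - (d ⬝ᵥ z / c) • w) + (d ⬝ᵥ z / c) • w := by rw [h1]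
            _ = z := by abel
        exact hb ⟨_, hγ, by rw [hbz2]; exact hz⟩
      obtain ⟨d', hd', hd'b⟩ := ihn (l.map f) (f b) hnb (by simpa using hln)
      have key : ∀ x : ι → ℚ, (d' - ((d' ⬝ᵥ w) / c) • d) ⬝ᵥ x = d' ⬝ᵥ (f x) := by
        intro x
        simp only [sub_dotProduct, smul_dotProduct, smul_eq_mul, f, LinearMap.coe_mk,
          AddHom.coe_mk, dotProduct_sub, dotProduct_smul]
        field_simp
      refine ⟨d' - ((d' ⬝ᵥ w) / c) • d, ?_, ?_⟩
      · intro u hu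
        rcases List.mem_cons.mp hu with h | h
        · subst h
          rw [key, hfw, dotProduct_zero]
        · rw [key]
          exact hd' _ (List.mem_map_of_mem h)
      · rw [key]
        exact hd'b


variable [DecidableEq ι]

lemma exists_finset_span (R : Set (ι → ℚ)) :
    ∃ s : Finset (ι → ℚ), ↑s ⊆ R ∧ Submodule.span ℚ (↑s : Set (ι → ℚ)) = Submodule.span ℚ R := by
  classical
  obtain ⟨T, hT⟩ := IsNoetherian.noetherian (Submodule.span ℚ R)
  have hmem : ∀ t ∈ T, t ∈ Submodule.span ℚ R := by
    intro t ht
    rw [← hT]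
    exact Submodule.subset_span ht
  choose F hF1 hF2 using fun (t : ι → ℚ) (ht : t ∈ Submodule.span ℚ R) =>
    Submodule.mem_span_finite_of_mem_span ht
  refine ⟨T.attach.biUnion (fun t => F t.1 (hmem t.1 t.2)), ?_, le_antisymm ?_ ?_⟩
  · intro x hx
    rw [Finset.mem_coe, Finset.mem_biUnion] at hx
    obtain ⟨t, -, hx⟩ := hx
    exact hF1 _ _ hx
  · apply Submodule.span_le.mpr
    intro x hx
    rw [Finset.mem_coe, Finset.mem_biUnion] at hx
    obtain ⟨t, -, hx⟩ := hx
    exact Submodule.subset_span (hF1 _ _ hx)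
  · rw [← hT]
    apply Submodule.span_le.mpr
    intro t ht
    have : t ∈ Submodule.span ℚ (↑(F t (hmem t ht)) : Set (ι → ℚ)) := hF2 _ _
    refine Submodule.span_mono ?_ this
    intro x hx
    rw [Finset.mem_coe, Finset.mem_biUnion]
    exact ⟨⟨t, ht⟩, Finset.mem_attach _ _, Finset.mem_coe.mp hx⟩





lemma inCone_decomp (R : Set (ι → ℚ)) :
    ∀ l : List (ι → ℚ), (∀ w ∈ l, w ∈ Submodule.span ℚ R ∨ ∃ k, w = Pi.single k (1:ℚ)) →
    ∀ x, InCone l x → ∃ y ∈ Submodule.span ℚ R, ∀ k, y k ≤ x k := by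
  intro l
  induction l with
  | nil =>
    intro _ x hx
    exact ⟨0, Submodule.zero_mem _, by rw [hx]; intro k; simp⟩
  | cons w l ih =>
    rintro hw x ⟨t, ht, hx⟩
    obtain ⟨y, hy, hyx⟩ := ih (fun u hu => hw u (List.mem_cons_of_mem _ hu)) _ hx
    rcases hw w (List.mem_cons_self) with hsp | ⟨k, rfl⟩
    · refine ⟨y + t • w, Submodule.add_mem _ hy (Submodule.smul_mem _ _ hsp), fun k => ?_⟩
      have := hyx k
      simp only [Pi.sub_apply, Pi.smul_apply, smul_eq_mul] at this
      simp only [Pi.add_apply, Pi.smul_apply, smul_eq_mul]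
      linarith
    · refine ⟨y, hy, fun k' => ?_⟩
      have h1 := hyx k'
      simp only [Pi.sub_apply, Pi.smul_apply, smul_eq_mul] at h1
      have h2 : 0 ≤ t * (Pi.single k (1:ℚ) : ι → ℚ) k' := by
        apply mul_nonneg ht
        rw [Pi.single_apply]
        split <;> norm_num
      linarith

lemma exists_pos_functional (R : Set (ι → ℚ)) (i : ι)
    (hobs : ∀ y ∈ Submodule.span ℚ R, (∀ k, y k ≤ 0) → ¬ y i < 0) :
    ∃ d : ι → ℚ, (∀ k, 0 ≤ d k) ∧ 0 < d i ∧ ∀ v ∈ R, d ⬝ᵥ v = 0 := by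
  classical
  obtain ⟨s, hsR, hs⟩ := exists_finset_span R
  set l : List (ι → ℚ) :=
    s.toList ++ s.toList.map (fun v => -v) ++ (Finset.univ : Finset ι).toList.map
      (fun k => Pi.single k (1:ℚ)) with hl
  have hmem : ∀ w ∈ l, w ∈ Submodule.span ℚ R ∨ ∃ k, w = Pi.single k (1:ℚ) := by
    intro w hw
    simp only [l, List.mem_append, List.mem_map, Finset.mem_toList] at hw
    rcases hw with (hw | ⟨v, hv, rfl⟩) | ⟨k, _, rfl⟩
    · exact Or.inl (Submodule.subset_span (hsR hw))
    · exact Or.inl (Submodule.neg_mem _ (Submodule.subset_span (hsR hv)))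
    · exact Or.inr ⟨k, rfl⟩
  have hnotin : ¬ InCone l (-Pi.single i 1) := by
    intro h
    obtain ⟨y, hy, hyx⟩ := inCone_decomp R l hmem _ h
    refine hobs y hy (fun k => ?_) ?_
    · have := hyx k
      have h3 : (-Pi.single i (1:ℚ) : ι → ℚ) k = -(if k = i then (1:ℚ) else 0) := by
        simp [Pi.single_apply]
      rw [h3] at this
      split at this <;> linarith
    · have := hyx i
      have h2 : (-Pi.single i (1:ℚ) : ι → ℚ) i = -1 := by simp
      rw [h2] at this
      linarith
  obtain ⟨d, hd, hdb⟩ := farkas l _ hnotin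
  have hdpos : ∀ k, 0 ≤ d k := by
    intro k
    have := hd (Pi.single k 1) (by
      simp only [l, List.mem_append, List.mem_map, Finset.mem_toList]
      exact Or.inr ⟨k, Finset.mem_univ k, rfl⟩)
    simpa [dotProduct_single] using this
  have hzero : ∀ v ∈ s, d ⬝ᵥ v = 0 := by
    intro v hv
    have h1 := hd v (by
      simp only [l, List.mem_append]
      exact Or.inl (Or.inl (Finset.mem_toList.mpr hv)))
    have h2 := hd (-v) (by
      simp only [l, List.mem_append, List.mem_map, Finset.mem_toList]
      exact Or.inl (Or.inr ⟨v, hv, rfl⟩))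
    rw [dotProduct_neg] at h2
    linarith
  refine ⟨d, hdpos, ?_, ?_⟩
  · have : d ⬝ᵥ (-Pi.single i 1) = -(d i) := by simp [dotProduct_single]
    rw [this] at hdb
    linarith
  · intro v hv
    have hvs : v ∈ Submodule.span ℚ (↑s : Set (ι → ℚ)) := hs ▸ Submodule.subset_span hv
    clear hv
    induction hvs using Submodule.span_induction with
    | mem x hx => exact hzero x (Finset.mem_coe.mp hx)
    | zero => simp
    | add x y _ _ hx hy => rw [dotProduct_add, hx, hy, add_zero]
    | smul a x _ hx => rw [dotProduct_smul, hx, smul_zero]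


lemma int_denom_clear (q : ℚ) (N : ℕ) (hdvd : q.den ∣ N) : ∃ z : ℤ, (z : ℚ) = N * q := by
  refine ⟨q.num * (N / q.den : ℕ), ?_⟩
  have hden : ((q.den : ℚ)) ≠ 0 := Nat.cast_ne_zero.mpr q.den_nz
  have h1 : ((N / q.den : ℕ) : ℚ) = (N : ℚ) / q.den := Nat.cast_div hdvd hden
  rw [Int.cast_mul, Int.cast_natCast, h1]
  conv_rhs => rw [← Rat.num_div_den q]
  ring

lemma exists_delta {M : Type*} [CommMonoidWithZero M]
    (hfg : ∃ S : Finset M, Submonoid.closure (S : Set M) = ⊤)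
    (hint : ∀ x y : M, x * y = 0 → x = 0 ∨ y = 0)
    (hsep : ∀ x y : M, x = x * y → x = 0 ∨ y = 1)
    (hnt : (0 : M) ≠ 1) :
    ∃ δ : M → ℕ, δ 1 = 0 ∧ (∀ m n, m ≠ 0 → n ≠ 0 → δ (m * n) = δ m + δ n) ∧
      (∀ m, m ≠ 0 → IsUnit m → δ m = 0) ∧ (∀ m, m ≠ 0 → ¬ IsUnit m → 0 < δ m) := by
  classical
  haveI : NoZeroDivisors M := ⟨fun {a b} h => hint a b h⟩
  haveI : Nontrivial M := ⟨⟨0, 1, hnt⟩⟩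
  obtain ⟨S, hS⟩ := hfg
  set S' : Finset M := S.filter (fun x => x ≠ 0) with hS'
  set ι := {x : M // x ∈ S'} with hι
  set g : ι → M := Subtype.val with hg
  have hgne : ∀ i : ι, g i ≠ 0 := fun i => (Finset.mem_filter.mp i.2).2
  have hgS : ∀ i : ι, g i ∈ S := fun i => (Finset.mem_filter.mp i.2).1
  set π : (ι → ℕ) → M := fun a => ∏ i, g i ^ a i with hπ
  have hπmul : ∀ a b, π (a + b) = π a * π b := by
    intro a b
    simp only [π, Pi.add_apply, pow_add]
    rw [Finset.prod_mul_distrib]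
  have hπ0 : π 0 = 1 := by simp [π]
  have hπne : ∀ a, π a ≠ 0 :=
    fun a => Finset.prod_ne_zero_iff.mpr (fun i _ => pow_ne_zero _ (hgne i))
  have hπsingle : ∀ i : ι, π (Pi.single i 1) = g i := by
    intro i
    calc π (Pi.single i 1) = ∏ j, g j ^ (Pi.single i 1 : ι → ℕ) j := rfl
      _ = g i := by
        rw [Finset.prod_eq_single i
          (fun j _ hj => by rw [Pi.single_eq_of_ne hj, pow_zero])
          (fun h => absurd (Finset.mem_univ i) h), Pi.single_eq_same, pow_one]
  have hπsmul : ∀ (c : ℕ) (a : ι → ℕ), π (c • a) = π a ^ c := by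
    intro c a
    simp only [π, Pi.smul_apply, smul_eq_mul, pow_mul']
    rw [← Finset.prod_pow]
  have hπsum : ∀ {β : Type} (s : Finset β) (c : β → ι → ℕ),
      π (∑ j ∈ s, c j) = ∏ j ∈ s, π (c j) := by
    intro β s c
    induction s using Finset.cons_induction with
    | empty => simpa using hπ0
    | cons j s hj ih => rw [Finset.sum_cons, Finset.prod_cons, hπmul, ih]
  have hπsurj : ∀ m : M, m ≠ 0 → ∃ a, π a = m := by
    intro m hm
    have hmem : m ∈ Submonoid.closure (S : Set M) := hS ▸ Submonoid.mem_top m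
    induction hmem using Submonoid.closure_induction with
    | mem x hx =>
      have hx0 : x ≠ 0 := hm
      have hxS' : x ∈ S' := Finset.mem_filter.mpr ⟨hx, hx0⟩
      exact ⟨Pi.single (⟨x, hxS'⟩ : ι) 1, hπsingle _⟩
    | one => exact ⟨0, hπ0⟩
    | mul x y hx hy ihx ihy =>
      have hx0 : x ≠ 0 := fun h => hm (by rw [h, zero_mul])
      have hy0 : y ≠ 0 := fun h => hm (by rw [h, mul_zero])
      obtain ⟨a, ha⟩ := ihx hx0
      obtain ⟨b, hb⟩ := ihy hy0
      exact ⟨a + b, by rw [hπmul, ha, hb]⟩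
  -- the relation vectors
  set R : Set (ι → ℚ) := {x | ∃ a b : ι → ℕ, π a = π b ∧
      x = (fun i => (a i : ℚ)) - (fun i => (b i : ℚ))} with hR
  -- key obstruction
  have hobs : ∀ (i : ι), ¬ IsUnit (g i) →
      ∀ y ∈ Submodule.span ℚ R, (∀ k, y k ≤ 0) → ¬ y i < 0 := by
    intro i hi y hy hyle hyi
    rw [Submodule.mem_span_set'] at hy
    obtain ⟨n, f, v, hsum⟩ := hy
    have hv : ∀ j, ∃ a b : ι → ℕ, π a = π b ∧
        (v j : ι → ℚ) = (fun i => (a i : ℚ)) - (fun i => (b i : ℚ)) := fun j => (v j).2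
    choose va vb hvab hveq using hv
    set N : ℕ := ∏ j, (f j).den with hN
    have hNpos : 0 < N := Finset.prod_pos (fun j _ => (f j).pos)
    have hz : ∀ j, ∃ z : ℤ, (z : ℚ) = N * f j :=
      fun j => int_denom_clear (f j) N (Finset.dvd_prod_of_mem _ (Finset.mem_univ j))
    choose z hzeq using hz
    set A : ι → ℕ := ∑ j, ((z j).toNat • va j + (-(z j)).toNat • vb j) with hA
    set B : ι → ℕ := ∑ j, ((z j).toNat • vb j + (-(z j)).toNat • va j) with hB
    have hcast : ∀ k, (A k : ℚ) - (B k : ℚ) = N * y k := by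
      intro k
      have hAk : (A k : ℚ) = ∑ j, ((((z j).toNat : ℚ)) * va j k + (((-(z j)).toNat : ℚ)) * vb j k) := by
        rw [hA, Finset.sum_apply]
        push_cast [Pi.add_apply, Pi.smul_apply, smul_eq_mul]
        rfl
      have hBk : (B k : ℚ) = ∑ j, ((((z j).toNat : ℚ)) * vb j k + (((-(z j)).toNat : ℚ)) * va j k) := by
        rw [hB, Finset.sum_apply]
        push_cast [Pi.add_apply, Pi.smul_apply, smul_eq_mul]
        rfl
      have hyk : y k = ∑ j, f j * (v j : ι → ℚ) k := by
        rw [← hsum, Finset.sum_apply]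
        simp [smul_eq_mul]
      rw [hAk, hBk, ← Finset.sum_sub_distrib, hyk, Finset.mul_sum]
      apply Finset.sum_congr rfl
      intro j _
      have h1 : (((z j).toNat : ℚ)) - (((-(z j)).toNat : ℚ)) = (z j : ℚ) := by
        have := Int.toNat_sub_toNat_neg (z j)
        exact_mod_cast congrArg (fun t : ℤ => (t : ℚ)) this
      have h2 : ((v j : ι → ℚ) k) = (va j k : ℚ) - (vb j k : ℚ) := by
        rw [hveq j]; simp
      rw [h2]
      rw [hzeq j] at h1
      linear_combination ((va j k : ℚ) - (vb j k : ℚ)) * h1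
    have hAB : π A = π B := by
      rw [hA, hB, hπsum, hπsum]
      apply Finset.prod_congr rfl
      intro j _
      rw [hπmul, hπmul, hπsmul, hπsmul, hπsmul, hπsmul, hvab j]
    have hle : ∀ k, A k ≤ B k := by
      intro k
      have := hcast k
      have h2 : (N : ℚ) * y k ≤ 0 :=
        mul_nonpos_of_nonneg_of_nonpos (by positivity) (hyle k)
      have : (A k : ℚ) ≤ (B k : ℚ) := by linarith
      exact_mod_cast this
    have hlt : A i < B i := by
      have := hcast i
      have h2 : (N : ℚ) * y i < 0 :=
        mul_neg_of_pos_of_neg (by positivity) hyi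
      have : (A i : ℚ) < (B i : ℚ) := by linarith
      exact_mod_cast this
    set c : ι → ℕ := fun k => B k - A k with hc
    have hBc : B = A + c := by
      funext k
      have := hle k
      simp only [Pi.add_apply, hc]
      omega
    have hπc : π c = 1 := by
      have h1 : π A = π A * π c := by
        rw [← hπmul, ← hBc, hAB]
      rcases hsep (π A) (π c) h1 with h | h
      · exact absurd h (hπne A)
      · exact h
    have hdvd : g i ∣ π c := by
      refine dvd_trans (dvd_pow_self (g i) ?_) (Finset.dvd_prod_of_mem (fun k => g k ^ c k) (Finset.mem_univ i))
      simp only [hc]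
      omega
    rw [hπc] at hdvd
    exact hi (isUnit_of_dvd_one hdvd)
  -- positive functionals for each non-unit generator, summed
  have hfun : ∀ i : ι, ¬ IsUnit (g i) →
      ∃ d : ι → ℚ, (∀ k, 0 ≤ d k) ∧ 0 < d i ∧ ∀ v ∈ R, d ⬝ᵥ v = 0 :=
    fun i hi => exists_pos_functional R i (hobs i hi)
  choose df hdf1 hdf2 hdf3 using hfun
  set T : Finset ι := Finset.univ.filter (fun i => ¬ IsUnit (g i)) with hT
  have hTmem : ∀ i : {x // x ∈ T}, ¬ IsUnit (g i.1) :=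
    fun i => (Finset.mem_filter.mp i.2).2
  set dtot : ι → ℚ := ∑ i ∈ T.attach, df i.1 (hTmem i) with hdtot
  have hd0 : ∀ k, 0 ≤ dtot k := by
    intro k
    rw [hdtot, Finset.sum_apply]
    exact Finset.sum_nonneg (fun j _ => hdf1 j.1 (hTmem j) k)
  have hdpos : ∀ i : ι, ¬ IsUnit (g i) → 0 < dtot i := by
    intro i hi
    rw [hdtot, Finset.sum_apply]
    refine Finset.sum_pos' (fun j _ => hdf1 j.1 (hTmem j) i) ?_
    have hiT : i ∈ T := Finset.mem_filter.mpr ⟨Finset.mem_univ i, hi⟩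
    exact ⟨⟨i, hiT⟩, Finset.mem_attach _ _, hdf2 i hi⟩
  have hdorth : ∀ v ∈ R, dtot ⬝ᵥ v = 0 := by
    intro v hv
    have : dtot ⬝ᵥ v = ∑ j ∈ T.attach, (df j.1 (hTmem j)) ⬝ᵥ v := by
      rw [hdtot]
      simp only [dotProduct, Finset.sum_apply, Finset.sum_mul]
      exact Finset.sum_comm
    rw [this]
    exact Finset.sum_eq_zero (fun j _ => hdf3 j.1 (hTmem j) v hv)
  -- clear denominators
  set Nd : ℕ := ∏ k, (dtot k).den with hNd
  have hNdpos : 0 < Nd := Finset.prod_pos (fun k _ => (dtot k).pos)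
  have hzd : ∀ k, ∃ zz : ℤ, (zz : ℚ) = Nd * dtot k :=
    fun k => int_denom_clear _ _ (Finset.dvd_prod_of_mem _ (Finset.mem_univ k))
  choose zd hzdeq using hzd
  set D : ι → ℕ := fun k => (zd k).toNat with hD
  have hDcast : ∀ k, (D k : ℚ) = Nd * dtot k := by
    intro k
    have h0 : (0:ℚ) ≤ (zd k : ℚ) := by
      rw [hzdeq k]
      exact mul_nonneg (by positivity) (hd0 k)
    have h1 : 0 ≤ zd k := by exact_mod_cast h0
    have h2 : ((zd k).toNat : ℚ) = (zd k : ℚ) := by exact_mod_cast Int.toNat_of_nonneg h1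
    rw [hD, h2]
    exact hzdeq k
  have hDpos : ∀ i : ι, ¬ IsUnit (g i) → 0 < D i := by
    intro i hi
    have : (0:ℚ) < (D i : ℚ) := by
      rw [hDcast i]
      exact mul_pos (by exact_mod_cast hNdpos) (hdpos i hi)
    exact_mod_cast this
  have hDorth : ∀ a b : ι → ℕ, π a = π b → D ⬝ᵥ a = D ⬝ᵥ b := by
    intro a b hab
    have hv : ((fun i => (a i : ℚ)) - (fun i => (b i : ℚ))) ∈ R := ⟨a, b, hab, rfl⟩
    have h0 := hdorth _ hv
    have hcast : ((D ⬝ᵥ a : ℕ) : ℚ) - ((D ⬝ᵥ b : ℕ) : ℚ)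
        = Nd * (dtot ⬝ᵥ ((fun i => (a i : ℚ)) - (fun i => (b i : ℚ)))) := by
      simp only [dotProduct, Pi.sub_apply, Finset.mul_sum]
      push_cast
      rw [← Finset.sum_sub_distrib]
      apply Finset.sum_congr rfl
      intro k _
      rw [hDcast k]
      ring
    rw [h0, mul_zero, sub_eq_zero] at hcast
    exact_mod_cast hcast
  -- define δ
  set δ : M → ℕ := fun m => if h : m = 0 then 0 else D ⬝ᵥ (hπsurj m h).choose with hδ
  have hδeq : ∀ (m : M) (hm : m ≠ 0) (a : ι → ℕ), π a = m → δ m = D ⬝ᵥ a := by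
    intro m hm a ha
    rw [hδ]
    simp only [dif_neg hm]
    exact hDorth _ _ (by rw [(hπsurj m hm).choose_spec, ha])
  have h1ne : (1 : M) ≠ 0 := fun h => hnt h.symm
  have hδ1 : δ 1 = 0 := by
    rw [hδeq 1 h1ne 0 hπ0]
    simp [dotProduct]
  have hδmul : ∀ m n : M, m ≠ 0 → n ≠ 0 → δ (m * n) = δ m + δ n := by
    intro m n hm hn
    obtain ⟨a, ha⟩ := hπsurj m hm
    obtain ⟨b, hb⟩ := hπsurj n hn
    rw [hδeq m hm a ha, hδeq n hn b hb,
      hδeq (m * n) (mul_ne_zero hm hn) (a + b) (by rw [hπmul, ha, hb])]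
    simp [dotProduct, Finset.sum_add_distrib, Nat.mul_add]
  have hδunit : ∀ m : M, m ≠ 0 → IsUnit m → δ m = 0 := by
    intro m hm hu
    obtain ⟨u, rfl⟩ := hu
    have hinv : (↑u⁻¹ : M) ≠ 0 := by
      intro h
      have := u.mul_inv
      rw [h, mul_zero] at this
      exact hnt this
    have := hδmul _ _ hm hinv
    rw [u.mul_inv, hδ1] at this
    omega
  have hδpos : ∀ m : M, m ≠ 0 → ¬ IsUnit m → 0 < δ m := by
    intro m hm hu
    obtain ⟨a, ha⟩ := hπsurj m hm
    have hex : ∃ i : ι, ¬ IsUnit (g i) ∧ a i ≠ 0 := by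
      by_contra h
      push_neg at h
      apply hu
      rw [← ha, hπ]
      refine Finset.prod_induction _ IsUnit (fun x y hx hy => hx.mul hy) isUnit_one ?_
      intro i _
      by_cases hgi : IsUnit (g i)
      · exact hgi.pow _
      · rw [h i hgi, pow_zero]
        exact isUnit_one
    obtain ⟨i, hgi, hai⟩ := hex
    rw [hδeq m hm a ha]
    have hterm : 0 < D i * a i := Nat.mul_pos (hDpos i hgi) (Nat.pos_of_ne_zero hai)
    calc 0 < D i * a i := hterm
      _ ≤ D ⬝ᵥ a := Finset.single_le_sum (f := fun k => D k * a k)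
          (fun k _ => Nat.zero_le _) (Finset.mem_univ i)
  exact ⟨δ, hδ1, hδmul, hδunit, hδpos⟩


end KSpecAux



/-- The topology of pointwise convergence on the `K`-spectrum `KSpec(M)`. -/
instance mwzHomTop {M K : Type*} [MulZeroOneClass M] [MulZeroOneClass K]
    [TopologicalSpace K] : TopologicalSpace (MonoidWithZeroHom M K) :=
  TopologicalSpace.induced (fun f => (f : M → K)) Pi.topologicalSpace

/-- Let `K` be `ℝ` or `ℂ` and `M` a finitely generated, integral, separated
commutative binoid. Let `X = MonoidWithZeroHom M K` with the pointwise-convergence topology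
and `A ⊆ X` the subspace of homomorphisms vanishing on all non-units. Then `A` is a
deformation retract of `X`: there is a continuous `F : X × [0,1] → X` with `F (p, 1) = p`,
`F (p, 0) ∈ A`, and `F (p, 0) = p` for `p ∈ A`; in particular the inclusion `A ↪ X` is a
homotopy equivalence. -/
theorem kspec_deformation_retract_units {K M : Type*} [RCLike K] [CommMonoidWithZero M]
    (hfg : ∃ S : Finset M, Submonoid.closure (S : Set M) = ⊤)
    (hint : ∀ x y : M, x * y = 0 → x = 0 ∨ y = 0)
    (hsep : ∀ x y : M, x = x * y → x = 0 ∨ y = 1) :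
    ∃ F : MonoidWithZeroHom M K × unitInterval → MonoidWithZeroHom M K,
      Continuous F ∧
      (∀ p : MonoidWithZeroHom M K, F (p, 1) = p) ∧
      (∀ p : MonoidWithZeroHom M K, ∀ m : M, ¬ IsUnit m → F (p, 0) m = 0) ∧
      (∀ p : MonoidWithZeroHom M K, (∀ m : M, ¬ IsUnit m → p m = 0) → F (p, 0) = p) ∧
      ∃ h : ContinuousMap.HomotopyEquiv
          {p : MonoidWithZeroHom M K // ∀ m : M, ¬ IsUnit m → p m = 0}
          (MonoidWithZeroHom M K),
        ∀ p : {p : MonoidWithZeroHom M K // ∀ m : M, ¬ IsUnit m → p m = 0},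
          h.toFun p = p.val := by
  classical
  -- get the grading δ
  obtain ⟨δ, hδ1, hδmul, hδunit, hδpos⟩ :
      ∃ δ : M → ℕ, δ 1 = 0 ∧ (∀ m n, m ≠ 0 → n ≠ 0 → δ (m * n) = δ m + δ n) ∧
        (∀ m, m ≠ 0 → IsUnit m → δ m = 0) ∧ (∀ m, m ≠ 0 → ¬ IsUnit m → 0 < δ m) := by
    by_cases hnt : (0 : M) = 1
    · have hall : ∀ m : M, m = 0 := fun m => by rw [← mul_one m, ← hnt, mul_zero]
      exact ⟨fun _ => 0, rfl, fun m n hm _ => absurd (hall m) hm,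
        fun m hm _ => absurd (hall m) hm, fun m hm _ => absurd (hall m) hm⟩
    · exact KSpecAux.exists_delta hfg hint hsep hnt
  -- the deformation
  set G : MonoidWithZeroHom M K × unitInterval → MonoidWithZeroHom M K := fun x =>
    { toFun := fun m => x.1 m * ((((x.2 : ℝ) ^ δ m : ℝ) : K)),
      map_zero' := by simp,
      map_one' := by
        show x.1 1 * ((((x.2 : ℝ) ^ δ 1 : ℝ) : K)) = 1
        rw [hδ1]
        simp,
      map_mul' := by
        intro m n
        show x.1 (m * n) * ((((x.2 : ℝ) ^ δ (m * n) : ℝ) : K))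
            = (x.1 m * ((((x.2 : ℝ) ^ δ m : ℝ) : K))) * (x.1 n * ((((x.2 : ℝ) ^ δ n : ℝ) : K)))
        by_cases hm : m = 0
        · subst hm; simp
        by_cases hn : n = 0
        · subst hn; simp
        rw [x.1.map_mul, hδmul m n hm hn, pow_add, RCLike.ofReal_mul]
        ring } with hG
  have hGapp : ∀ x m, G x m = x.1 m * ((((x.2 : ℝ) ^ δ m : ℝ) : K)) := fun x m => rfl
  have hGcont : Continuous G := by
    rw [hG]
    apply continuous_induced_rng.mpr
    apply continuous_pi
    intro m
    have h1 : Continuous (fun x : MonoidWithZeroHom M K × unitInterval => x.1 m) :=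
      ((continuous_apply m).comp continuous_induced_dom).comp continuous_fst
    have h2 : Continuous (fun x : MonoidWithZeroHom M K × unitInterval =>
        ((((x.2 : ℝ) ^ δ m : ℝ) : K))) :=
      RCLike.continuous_ofReal.comp
        ((continuous_pow (δ m)).comp (continuous_subtype_val.comp continuous_snd))
    exact h1.mul h2
  have hG1 : ∀ p, G (p, 1) = p := by
    intro p
    ext m
    rw [hGapp]
    norm_num
  have hG0 : ∀ p, ∀ m : M, ¬ IsUnit m → G (p, 0) m = 0 := by
    intro p m hm
    by_cases h0 : m = 0
    · subst h0; rw [hGapp]; simp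
    · rw [hGapp]
      have : (0:ℝ) ^ δ m = 0 := zero_pow (hδpos m h0 hm).ne'
      norm_num [this]
  have hGA : ∀ p : MonoidWithZeroHom M K, (∀ m : M, ¬ IsUnit m → p m = 0) → G (p, 0) = p := by
    intro p hp
    ext m
    by_cases h0 : m = 0
    · subst h0; rw [hGapp]; simp
    by_cases hu : IsUnit m
    · rw [hGapp, hδunit m h0 hu]
      norm_num
    · rw [hGapp, hp m hu]
      simp
  refine ⟨G, hGcont, hG1, hG0, hGA, ?_⟩
  -- homotopy equivalence
  set A := {p : MonoidWithZeroHom M K // ∀ m : M, ¬ IsUnit m → p m = 0} with hA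
  set toC : C(A, MonoidWithZeroHom M K) := ⟨Subtype.val, continuous_subtype_val⟩ with htoC
  set invC : C(MonoidWithZeroHom M K, A) :=
    ⟨fun p => ⟨G (p, 0), fun m hm => hG0 p m hm⟩,
      Continuous.subtype_mk (hGcont.comp (continuous_id.prodMk continuous_const)) _⟩ with hinvC
  have hleft : invC.comp toC = ContinuousMap.id A := by
    apply ContinuousMap.ext
    intro a
    apply Subtype.ext
    exact hGA a.1 a.2
  have H : ContinuousMap.Homotopy (toC.comp invC) (ContinuousMap.id _) :=
    { toFun := fun x => G (x.2, x.1),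
      continuous_toFun := hGcont.comp (continuous_snd.prodMk continuous_fst),
      map_zero_left := fun p => rfl,
      map_one_left := fun p => hG1 p }
  refine ⟨⟨toC, invC, by rw [hleft], ⟨H⟩⟩, fun p => rfl⟩
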